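/- For n ≥ 1, the independence complex of the graph X_n^{(1)} = H_{1×1×n} \ {v^1_{2n+1}} is homotopy equivalent to the sphere S^n. -/

import Mathlib

open Function Set

/-- A set of vertices of a simple graph is independent if its elements are
pairwise non-adjacent.  The independence complex `Ind G` is the simplicial
complex whose faces are exactly the independent sets. -/
def isIndepSet {V : Type*} (G : SimpleGraph V) (s : Set V) : Prop :=
  s.Pairwise fun a b => ¬ G.Adj a b

/-- Geometric realization of the subcomplex of the independence complex of `G`
consisting of the independent sets contained in `S` (so `S = univ` gives
`Ind G`, `S = {v}ᶜ` gives `Ind (G \ v)`, and `S = N[v]ᶜ` gives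
`Ind (G \ N[v])`): convex combinations of vertices whose support is a face. -/
def indRealizationIn {V : Type*} (G : SimpleGraph V) (S : Set V) : Set (V → ℝ) :=
  {f | (∀ v, 0 ≤ f v) ∧ (Function.support f).Finite ∧ Function.support f ⊆ S ∧
       isIndepSet G (Function.support f) ∧ ∑ᶠ v, f v = 1}

/-- Geometric realization of the independence complex `Ind G`. -/
def indRealization {V : Type*} (G : SimpleGraph V) : Set (V → ℝ) :=
  indRealizationIn G Set.univ

/-- The (unreduced) suspension of a topological space. -/
def Susp (X : Type*) [TopologicalSpace X] : Type _ :=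
  Quot (fun p q : X × unitInterval => (p.2 = 0 ∧ q.2 = 0) ∨ (p.2 = 1 ∧ q.2 = 1))

instance (X : Type*) [TopologicalSpace X] : TopologicalSpace (Susp X) :=
  inferInstanceAs (TopologicalSpace (Quot _))

/-- The wedge of two pointed topological spaces. -/
def WedgeAt (X Y : Type*) [TopologicalSpace X] [TopologicalSpace Y] (x₀ : X) (y₀ : Y) :
    Type _ :=
  Quot (fun p q : X ⊕ Y => p = Sum.inl x₀ ∧ q = Sum.inr y₀)

instance (X Y : Type*) [TopologicalSpace X] [TopologicalSpace Y] (x₀ : X) (y₀ : Y) :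
    TopologicalSpace (WedgeAt X Y x₀ y₀) :=
  inferInstanceAs (TopologicalSpace (Quot _))

/-- The sphere `S^{m-1}`, realized as the unit sphere of `ℝ^m`. -/
def sphere' (m : ℕ) : Set (EuclideanSpace ℝ (Fin m)) := Metric.sphere 0 1

/-- A wedge of two `m`-dimensional spheres: the two unit spheres of `ℝ^{m+1}`
centered at `±e₀`, which are tangent at the origin. -/
def sphereWedge (m : ℕ) : Set (EuclideanSpace ℝ (Fin (m + 1))) :=
  {x | dist x (EuclideanSpace.single (0 : Fin (m + 1)) (1 : ℝ)) = 1 ∨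
       dist x (-(EuclideanSpace.single (0 : Fin (m + 1)) (1 : ℝ))) = 1}

/-- The hexagonal line tiling graph `H_{1×1×n}`: two rows (row `j` carries the
vertices `v^{j+1}_1, …, v^{j+1}_{2n+1}`, column `i : Fin (2n+1)` being the
1-indexed vertex `v^{j+1}_{i+1}`), each row forming a path, together with the
rung edges `{v^1_{2t-1}, v^2_{2t-1}}`, i.e. rungs at even 0-indexed columns. -/
def hexRow (n : ℕ) : SimpleGraph (Fin 2 × Fin (2 * n + 1)) :=
  SimpleGraph.fromRel (fun p q =>
    (p.1 = q.1 ∧ (p.2 : ℕ) + 1 = (q.2 : ℕ)) ∨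
    (p.1 ≠ q.1 ∧ p.2 = q.2 ∧ (p.2 : ℕ) % 2 = 0))

/-- The last vertex `v^1_{2n+1}` of the top row of `H_{1×1×n}`. -/
def hexTop (n : ℕ) : Fin 2 × Fin (2 * n + 1) := (0, ⟨2 * n, by omega⟩)

/-- `X_n^{(1)} = H_{1×1×n} \ {v^1_{2n+1}}` : realization of its independence
complex, as the subcomplex of `Ind (H_{1×1×n})` of faces avoiding `v^1_{2n+1}`. -/
def Xn1 (n : ℕ) : Set (Fin 2 × Fin (2 * n + 1) → ℝ) :=
  indRealizationIn (hexRow n) ({hexTop n}ᶜ)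

/-- `X_n^{(2)} = H_{1×1×n} \ N[v^1_{2n+1}]` : realization of its independence
complex, as the subcomplex of `Ind (H_{1×1×n})` of faces avoiding `N[v^1_{2n+1}]`. -/
def Xn2 (n : ℕ) : Set (Fin 2 × Fin (2 * n + 1) → ℝ) :=
  indRealizationIn (hexRow n) ((insert (hexTop n) ((hexRow n).neighborSet (hexTop n)))ᶜ)



set_option linter.unusedSectionVars false
set_option linter.unusedTactic false
set_option linter.unusedVariables false

section Fold
variable {V : Type*} [Fintype V] [DecidableEq V] (G : SimpleGraph V)

/-- the fold map: move `t` of the mass at `v` over to `u`. -/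
def foldMap (u v : V) (t : ℝ) (f : V → ℝ) : V → ℝ :=
  fun w => if w = v then (1 - t) * f v else if w = u then f u + t * f v else f w

lemma foldMap_eq_self (u v : V) (t : ℝ) (f : V → ℝ) (hf : f v = 0) :
    foldMap u v t f = f := by
  funext w
  show (if w = v then (1 - t) * f v else if w = u then f u + t * f v else f w) = f w
  rcases eq_or_ne w v with rfl | hwv
  · rw [if_pos rfl, hf]; ring
  · rw [if_neg hwv]
    rcases eq_or_ne w u with rfl | hwu
    · rw [if_pos rfl, hf]; ring
    · rw [if_neg hwu]

lemma foldMap_support (u v : V) (t : ℝ) (f : V → ℝ) :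
    support (foldMap u v t f) ⊆ support f ∪ {u} := by
  intro w hw
  by_contra hc
  simp only [mem_union, mem_singleton_iff, mem_support, not_or, not_not] at hc
  obtain ⟨h1, h2⟩ := hc
  apply hw
  show (if w = v then (1 - t) * f v else if w = u then f u + t * f v else f w) = 0
  rcases eq_or_ne w v with rfl | hwv
  · rw [if_pos rfl, h1]; ring
  · rw [if_neg hwv]
    rcases eq_or_ne w u with rfl | hwu
    · exact absurd rfl h2
    · rw [if_neg hwu]; exact h1

lemma foldMap_mem (u v : V) (huv : u ≠ v) (hadj : ¬ G.Adj u v)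
    (S : Set V) (hu : u ∈ S)
    (hdom : ∀ w ∈ S, G.Adj u w → G.Adj v w)
    (t : ℝ) (ht0 : 0 ≤ t) (ht1 : t ≤ 1)
    (f : V → ℝ) (hf : f ∈ indRealizationIn G S) :
    foldMap u v t f ∈ indRealizationIn G S := by
  obtain ⟨hpos, hfin, hsub, hind, hsum⟩ := hf
  by_cases hv0 : f v = 0
  · rw [foldMap_eq_self u v t f hv0]
    exact ⟨hpos, hfin, hsub, hind, hsum⟩
  refine ⟨?_, (Set.finite_univ.subset (subset_univ _)), ?_, ?_, ?_⟩
  · intro w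
    show 0 ≤ (if w = v then (1 - t) * f v else if w = u then f u + t * f v else f w)
    rcases eq_or_ne w v with rfl | hwv
    · rw [if_pos rfl]; have := hpos w; nlinarith
    · rw [if_neg hwv]
      rcases eq_or_ne w u with rfl | hwu
      · rw [if_pos rfl]; have := hpos w; have := hpos v; nlinarith
      · rw [if_neg hwu]; exact hpos w
  · exact (foldMap_support u v t f).trans (union_subset hsub (by simpa using hu))
  · -- independence of the support
    have hindbig : isIndepSet G (support f ∪ {u}) := by
      intro a ha b hb hab
      have hv : v ∈ support f := hv0
      rcases ha with ha | ha
      · rcases hb with hb | hb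
        · exact hind ha hb hab
        · simp only [mem_singleton_iff] at hb; subst hb
          intro hadj2
          have hadj3 : G.Adj b a := G.adj_symm hadj2
          have : G.Adj v a := hdom a (hsub ha) hadj3
          rcases eq_or_ne a v with rfl | hav
          · exact (G.loopless.irrefl a) this
          · exact hind hv ha (Ne.symm hav) this
      · simp only [mem_singleton_iff] at ha; subst ha
        rcases hb with hb | hb
        · intro hadj2
          have : G.Adj v b := hdom b (hsub hb) hadj2
          rcases eq_or_ne b v with rfl | hbv
          · exact (G.loopless.irrefl b) this
          · exact hind hv hb (Ne.symm hbv) this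
        · simp only [mem_singleton_iff] at hb; subst hb
          exact absurd rfl hab
    exact hindbig.mono (foldMap_support u v t f)
  · -- the sum
    rw [finsum_eq_sum_of_fintype] at hsum ⊢
    have hrw : ∀ w, foldMap u v t f w =
        f w + (if w = u then t * f v else 0) - (if w = v then t * f v else 0) := by
      intro w
      show (if w = v then (1 - t) * f v else if w = u then f u + t * f v else f w)
          = f w + (if w = u then t * f v else 0) - (if w = v then t * f v else 0)
      rcases eq_or_ne w v with rfl | hwv
      · rw [if_pos rfl, if_pos rfl, if_neg (fun h => huv h.symm)]; ring
      · rw [if_neg hwv, if_neg hwv]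
        rcases eq_or_ne w u with rfl | hwu
        · rw [if_pos rfl, if_pos rfl]; ring
        · rw [if_neg hwu, if_neg hwu]; ring
    simp only [hrw]
    rw [Finset.sum_sub_distrib, Finset.sum_add_distrib]
    rw [Finset.sum_ite_eq' Finset.univ u (fun _ => t * f v),
        Finset.sum_ite_eq' Finset.univ v (fun _ => t * f v)]
    simp [hsum]

lemma foldMap_one_mem (u v : V) (huv : u ≠ v) (hadj : ¬ G.Adj u v)
    (S : Set V) (hu : u ∈ S)
    (hdom : ∀ w ∈ S, G.Adj u w → G.Adj v w)
    (f : V → ℝ) (hf : f ∈ indRealizationIn G S) :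
    foldMap u v 1 f ∈ indRealizationIn G (S \ {v}) := by
  obtain ⟨hpos, hfin, hsub, hind, hsum⟩ :=
    foldMap_mem G u v huv hadj S hu hdom 1 zero_le_one le_rfl f hf
  refine ⟨hpos, hfin, ?_, hind, hsum⟩
  intro w hw
  refine ⟨hsub hw, ?_⟩
  simp only [mem_singleton_iff]
  intro hwv
  apply hw
  rw [hwv]
  show (if v = v then (1 - 1) * f v else if v = u then f u + 1 * f v else f v) = 0
  rw [if_pos rfl]; ring

lemma indRealizationIn_mono (S S' : Set V) (h : S ⊆ S') :
    indRealizationIn G S ⊆ indRealizationIn G S' :=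
  fun _ ⟨h1, h2, h3, h4, h5⟩ => ⟨h1, h2, h3.trans h, h4, h5⟩

lemma continuous_foldMap_aux (u v : V) (S : Set V)
    (memo : ∀ (t : unitInterval) (f : ↥(indRealizationIn G S)),
      foldMap u v t f.1 ∈ indRealizationIn G S) :
    Continuous (fun p : unitInterval × ↥(indRealizationIn G S) =>
      (⟨foldMap u v p.1 p.2.1, memo p.1 p.2⟩ : ↥(indRealizationIn G S))) := by
  apply Continuous.subtype_mk
  apply continuous_pi
  intro w
  unfold foldMap
  have hcv : Continuous (fun p : unitInterval × ↥(indRealizationIn G S) => (p.2.1 : V → ℝ) v) :=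
    (continuous_apply v).comp (continuous_subtype_val.comp continuous_snd)
  have hcu : Continuous (fun p : unitInterval × ↥(indRealizationIn G S) => (p.2.1 : V → ℝ) u) :=
    (continuous_apply u).comp (continuous_subtype_val.comp continuous_snd)
  have hcw : Continuous (fun p : unitInterval × ↥(indRealizationIn G S) => (p.2.1 : V → ℝ) w) :=
    (continuous_apply w).comp (continuous_subtype_val.comp continuous_snd)
  have hct : Continuous (fun p : unitInterval × ↥(indRealizationIn G S) => (p.1 : ℝ)) :=
    continuous_subtype_val.comp continuous_fst
  split_ifs with h1 h2
  · exact (continuous_const.sub hct).mul hcv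
  · exact hcu.add (hct.mul hcv)
  · exact hcw

/-- THE FOLD LEMMA. -/
lemma fold_he (S : Set V) (u v : V) (hu : u ∈ S) (huv : u ≠ v)
    (hadj : ¬ G.Adj u v) (hdom : ∀ w ∈ S, G.Adj u w → G.Adj v w) :
    Nonempty (ContinuousMap.HomotopyEquiv
      ↥(indRealizationIn G S) ↥(indRealizationIn G (S \ {v}))) := by
  have memo : ∀ (t : unitInterval) (f : ↥(indRealizationIn G S)),
      foldMap u v t f.1 ∈ indRealizationIn G S := fun t f =>
    foldMap_mem G u v huv hadj S hu hdom t t.2.1 t.2.2 f.1 f.2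
  have hcont := continuous_foldMap_aux G u v S memo
  have hvzero : ∀ g : V → ℝ, g ∈ indRealizationIn G (S \ {v}) → g v = 0 := by
    intro g hg
    by_contra h
    exact (hg.2.2.1 (h : v ∈ support g)).2 rfl
  refine ⟨{
      toFun := ⟨fun f => ⟨foldMap u v 1 f.1,
          foldMap_one_mem G u v huv hadj S hu hdom f.1 f.2⟩, ?_⟩
      invFun := ⟨fun g => ⟨g.1, indRealizationIn_mono G _ _ (diff_subset) g.2⟩,
          Continuous.subtype_mk continuous_subtype_val _⟩
      left_inv := ⟨{
        toFun := fun p => ⟨foldMap u v (unitInterval.symm p.1) p.2.1,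
          memo (unitInterval.symm p.1) p.2⟩
        continuous_toFun := ?_
        map_zero_left := ?_
        map_one_left := ?_ }⟩
      right_inv := ?_ }⟩
  · -- continuity of toFun
    apply Continuous.subtype_mk
    have h2 := hcont.comp (Continuous.prodMk continuous_const continuous_id :
      Continuous (fun f : ↥(indRealizationIn G S) => ((1 : unitInterval), f)))
    exact continuous_subtype_val.comp h2
  · -- continuity of the homotopy
    exact hcont.comp ((unitInterval.continuous_symm.comp continuous_fst).prodMk continuous_snd)
  · intro x
    apply Subtype.ext
    show foldMap u v ((unitInterval.symm 0 : unitInterval) : ℝ) x.1 = foldMap u v 1 x.1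
    norm_num
  · intro x
    apply Subtype.ext
    show foldMap u v ((unitInterval.symm 1 : unitInterval) : ℝ) x.1 = x.1
    have : ((unitInterval.symm 1 : unitInterval) : ℝ) = 0 := by norm_num
    rw [this]
    funext w
    show (if w = v then (1 - 0) * x.1 v else if w = u then x.1 u + 0 * x.1 v else x.1 w) = x.1 w
    rcases eq_or_ne w v with rfl | hwv
    · rw [if_pos rfl]; ring
    · rw [if_neg hwv]
      rcases eq_or_ne w u with rfl | hwu
      · rw [if_pos rfl]; ring
      · rw [if_neg hwu]
  · -- right_inv : the two maps are equal
    have heq : ∀ g : ↥(indRealizationIn G (S \ {v})),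
        foldMap u v 1 g.1 = g.1 := fun g => foldMap_eq_self u v 1 g.1 (hvzero g.1 g.2)
    refine ⟨ContinuousMap.Homotopy.cast (ContinuousMap.Homotopy.refl _) ?_ rfl⟩
    ext g
    exact congrFun (heq g).symm _


end Fold

lemma hex_adj {n : ℕ} (v w : Fin 2 × Fin (2 * n + 1)) :
    (hexRow n).Adj v w ↔
      (((v.1 : ℕ) = (w.1 : ℕ)) ∧ ((v.2 : ℕ) + 1 = (w.2 : ℕ) ∨ (w.2 : ℕ) + 1 = (v.2 : ℕ))) ∨
      ((v.1 : ℕ) ≠ (w.1 : ℕ) ∧ (v.2 : ℕ) = (w.2 : ℕ) ∧ (v.2 : ℕ) % 2 = 0) := by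
  rw [hexRow, SimpleGraph.fromRel_adj]
  constructor
  · rintro ⟨hne, (⟨h1, h2⟩ | ⟨h1, h2, h3⟩) | (⟨h1, h2⟩ | ⟨h1, h2, h3⟩)⟩
    · exact Or.inl ⟨congrArg Fin.val h1, Or.inl h2⟩
    · exact Or.inr ⟨fun h => h1 (Fin.val_injective h), congrArg Fin.val h2, h3⟩
    · exact Or.inl ⟨(congrArg Fin.val h1).symm, Or.inr h2⟩
    · refine Or.inr ⟨fun h => h1 (Fin.val_injective h.symm), (congrArg Fin.val h2).symm, ?_⟩
      rw [← h2]; exact h3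
  · rintro (⟨h1, h2 | h2⟩ | ⟨h1, h2, h3⟩)
    · refine ⟨?_, Or.inl (Or.inl ⟨Fin.val_injective h1, h2⟩)⟩
      intro h
      rw [h] at h2
      omega
    · refine ⟨?_, Or.inr (Or.inl ⟨(Fin.val_injective h1).symm, h2⟩)⟩
      intro h
      rw [h] at h2
      omega
    · refine ⟨?_, Or.inl (Or.inr ⟨fun h => h1 (congrArg Fin.val h), Fin.val_injective h2, h3⟩)⟩
      intro h
      rw [h] at h1
      exact h1 rfl


/-- the intermediate vertex sets in the fold chain -/
def hexT (n k : ℕ) : Set (Fin 2 × Fin (2 * n + 1)) :=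
  {v | ((v.1 : ℕ) = (n + k) % 2 ∧ (v.2 : ℕ) ≤ 2 * k - 1) ∨
       ((v.1 : ℕ) ≠ (n + k) % 2 ∧ (v.2 : ℕ) ≤ 2 * k - 2) ∨
       (2 * k ≤ (v.2 : ℕ) ∧ (v.2 : ℕ) ≤ 2 * n - 3 ∧
         (v.1 : ℕ) = (n + (v.2 : ℕ) / 2 + 1) % 2) ∨
       ((v.1 : ℕ) = 0 ∧ ((v.2 : ℕ) = 2 * n - 2 ∨ (v.2 : ℕ) = 2 * n - 1)) ∨
       ((v.1 : ℕ) = 1 ∧ ((v.2 : ℕ) = 2 * n - 1 ∨ (v.2 : ℕ) = 2 * n))}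

/-- the final vertex set: a perfect matching with `n+1` edges -/
def hexFin (n : ℕ) : Set (Fin 2 × Fin (2 * n + 1)) :=
  {v | ((v.2 : ℕ) = 0 ∧ 2 ≤ n) ∨
       (2 ≤ (v.2 : ℕ) ∧ (v.2 : ℕ) ≤ 2 * n - 3 ∧
         (v.1 : ℕ) = (n + (v.2 : ℕ) / 2 + 1) % 2) ∨
       ((v.1 : ℕ) = 0 ∧ ((v.2 : ℕ) = 2 * n - 2 ∨ (v.2 : ℕ) = 2 * n - 1)) ∨
       ((v.1 : ℕ) = 1 ∧ ((v.2 : ℕ) = 2 * n - 1 ∨ (v.2 : ℕ) = 2 * n))}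

set_option maxHeartbeats 1000000 in
lemma chain_step (n : ℕ) (hn : 2 ≤ n) (k : ℕ) (hk1 : 1 ≤ k) (hk2 : k + 1 ≤ n - 1) :
    Nonempty (ContinuousMap.HomotopyEquiv
      ↥(indRealizationIn (hexRow n) (hexT n (k+1)))
      ↥(indRealizationIn (hexRow n) (hexT n k))) := by
  set G := hexRow n
  -- first fold : remove (1 - L', 2k), u = (L', 2k+1), where L' = (n+k+1)%2
  obtain ⟨e1⟩ := fold_he G (hexT n (k+1))
    (⟨⟨(n+k+1) % 2, by omega⟩, ⟨2*k+1, by omega⟩⟩)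
    (⟨⟨1 - (n+k+1) % 2, by omega⟩, ⟨2*k, by omega⟩⟩)
    (by simp only [hexT, mem_setOf_eq]; (try dsimp only); omega)
    (by simp only [Ne, Prod.ext_iff, Fin.ext_iff]; (try dsimp only); omega)
    (by rw [hex_adj]; (try dsimp only); omega)
    (by
      intro w hw hadj
      rw [hex_adj] at hadj ⊢
      simp only [hexT, mem_setOf_eq] at hw
      have hb1 := w.1.isLt
      have hb2 := w.2.isLt
      try dsimp only at hadj hw ⊢
      omega)
  -- second fold : remove (L', 2k-1), u = (L', 2k+1)
  obtain ⟨e2⟩ := fold_he G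
    (hexT n (k+1) \ {(⟨⟨1 - (n+k+1) % 2, by omega⟩, ⟨2*k, by omega⟩⟩ : Fin 2 × Fin (2*n+1))})
    (⟨⟨(n+k+1) % 2, by omega⟩, ⟨2*k+1, by omega⟩⟩)
    (⟨⟨(n+k+1) % 2, by omega⟩, ⟨2*k-1, by omega⟩⟩)
    (by
      simp only [mem_diff, hexT, mem_setOf_eq, mem_singleton_iff, Prod.ext_iff, Fin.ext_iff]
      try dsimp only
      omega)
    (by simp only [Ne, Prod.ext_iff, Fin.ext_iff]; (try dsimp only); omega)
    (by rw [hex_adj]; (try dsimp only); omega)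
    (by
      intro w hw hadj
      rw [hex_adj] at hadj ⊢
      simp only [mem_diff, hexT, mem_setOf_eq, mem_singleton_iff, Prod.ext_iff,
        Fin.ext_iff] at hw
      have hb1 := w.1.isLt
      have hb2 := w.2.isLt
      try dsimp only at hadj hw ⊢
      omega)
  have hset :
      (hexT n (k+1) \ {(⟨⟨1 - (n+k+1) % 2, by omega⟩, ⟨2*k, by omega⟩⟩ : Fin 2 × Fin (2*n+1))})
        \ {(⟨⟨(n+k+1) % 2, by omega⟩, ⟨2*k-1, by omega⟩⟩ : Fin 2 × Fin (2*n+1))}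
      = hexT n k := by
    ext w
    simp only [mem_diff, hexT, mem_setOf_eq, mem_singleton_iff, Prod.ext_iff, Fin.ext_iff]
    have hb1 := w.1.isLt
    have hb2 := w.2.isLt
    try dsimp only
    omega
  rw [hset] at e2
  exact ⟨e1.trans e2⟩

set_option maxHeartbeats 1000000 in
lemma chain_base (n : ℕ) (hn : 2 ≤ n) :
    Nonempty (ContinuousMap.HomotopyEquiv
      ↥(indRealizationIn (hexRow n) (hexT n 1))
      ↥(indRealizationIn (hexRow n) (hexFin n))) := by
  obtain ⟨e1⟩ := fold_he (hexRow n) (hexT n 1)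
    (⟨⟨n % 2, by omega⟩, ⟨0, by omega⟩⟩)
    (⟨⟨(n+1) % 2, by omega⟩, ⟨1, by omega⟩⟩)
    (by simp only [hexT, mem_setOf_eq]; (try dsimp only); omega)
    (by simp only [Ne, Prod.ext_iff, Fin.ext_iff]; (try dsimp only); omega)
    (by rw [hex_adj]; (try dsimp only); omega)
    (by
      intro w hw hadj
      rw [hex_adj] at hadj ⊢
      simp only [hexT, mem_setOf_eq] at hw
      have hb1 := w.1.isLt
      have hb2 := w.2.isLt
      try dsimp only at hadj hw ⊢
      omega)
  have hset : hexT n 1 \ {(⟨⟨(n+1) % 2, by omega⟩, ⟨1, by omega⟩⟩ : Fin 2 × Fin (2*n+1))}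
      = hexFin n := by
    ext w
    simp only [mem_diff, hexT, hexFin, mem_setOf_eq, mem_singleton_iff, Prod.ext_iff,
      Fin.ext_iff]
    have hb1 := w.1.isLt
    have hb2 := w.2.isLt
    try dsimp only
    omega
  rw [hset] at e1
  exact ⟨e1⟩

set_option maxHeartbeats 1000000 in
lemma chain_all (n : ℕ) (hn : 2 ≤ n) : ∀ k, 1 ≤ k → k ≤ n - 1 →
    Nonempty (ContinuousMap.HomotopyEquiv
      ↥(indRealizationIn (hexRow n) (hexT n k))
      ↥(indRealizationIn (hexRow n) (hexFin n))) := by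
  intro k hk1
  induction k, hk1 using Nat.le_induction with
  | base => intro _; exact chain_base n hn
  | succ k hk ih =>
    intro hk2
    obtain ⟨e1⟩ := chain_step n hn k hk hk2
    obtain ⟨e2⟩ := ih (by omega)
    exact ⟨e1.trans e2⟩

set_option maxHeartbeats 1000000 in
lemma top_to_fin (n : ℕ) (hn : 1 ≤ n) :
    Nonempty (ContinuousMap.HomotopyEquiv
      ↥(indRealizationIn (hexRow n) ({hexTop n}ᶜ))
      ↥(indRealizationIn (hexRow n) (hexFin n))) := by
  -- first fold (valid for all n ≥ 1): remove (1, 2n-2), u = (0, 2n-1)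
  obtain ⟨e1⟩ := fold_he (hexRow n) ({hexTop n}ᶜ)
    (⟨⟨0, by omega⟩, ⟨2*n-1, by omega⟩⟩)
    (⟨⟨1, by omega⟩, ⟨2*n-2, by omega⟩⟩)
    (by
      simp only [mem_compl_iff, mem_singleton_iff, hexTop, Prod.ext_iff, Fin.ext_iff]
      (try dsimp only); omega)
    (by simp only [Ne, Prod.ext_iff, Fin.ext_iff]; (try dsimp only); omega)
    (by rw [hex_adj]; (try dsimp only); omega)
    (by
      intro w hw hadj
      rw [hex_adj] at hadj ⊢
      simp only [mem_compl_iff, mem_singleton_iff, hexTop, Prod.ext_iff, Fin.ext_iff] at hw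
      have hb1 := w.1.isLt
      have hb2 := w.2.isLt
      try dsimp only at hadj hw ⊢
      omega)
  rcases eq_or_lt_of_le hn with heq | hlt
  · -- n = 1 : we are done, the set is already `hexFin 1`
    subst heq
    have hset : ({hexTop 1}ᶜ : Set (Fin 2 × Fin 3)) \
        {(⟨⟨1, by omega⟩, ⟨2*1-2, by omega⟩⟩ : Fin 2 × Fin 3)} = hexFin 1 := by
      ext w
      simp only [mem_diff, mem_compl_iff, mem_singleton_iff, hexTop, hexFin, mem_setOf_eq,
        Prod.ext_iff, Fin.ext_iff]
      have hb1 := w.1.isLt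
      have hb2 := w.2.isLt
      try dsimp only
      omega
    rw [hset] at e1
    exact ⟨e1⟩
  · -- n ≥ 2 : second fold, remove (0, 2n-3), u = (0, 2n-1)
    have hn2 : 2 ≤ n := hlt
    obtain ⟨e2⟩ := fold_he (hexRow n)
      (({hexTop n}ᶜ) \ {(⟨⟨1, by omega⟩, ⟨2*n-2, by omega⟩⟩ : Fin 2 × Fin (2*n+1))})
      (⟨⟨0, by omega⟩, ⟨2*n-1, by omega⟩⟩)
      (⟨⟨0, by omega⟩, ⟨2*n-3, by omega⟩⟩)
      (by
        simp only [mem_diff, mem_compl_iff, mem_singleton_iff, hexTop, Prod.ext_iff,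
          Fin.ext_iff]
        (try dsimp only); omega)
      (by simp only [Ne, Prod.ext_iff, Fin.ext_iff]; (try dsimp only); omega)
      (by rw [hex_adj]; (try dsimp only); omega)
      (by
        intro w hw hadj
        rw [hex_adj] at hadj ⊢
        simp only [mem_diff, mem_compl_iff, mem_singleton_iff, hexTop, Prod.ext_iff,
          Fin.ext_iff] at hw
        have hb1 := w.1.isLt
        have hb2 := w.2.isLt
        try dsimp only at hadj hw ⊢
        omega)
    have hset : (({hexTop n}ᶜ) \
          {(⟨⟨1, by omega⟩, ⟨2*n-2, by omega⟩⟩ : Fin 2 × Fin (2*n+1))}) \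
          {(⟨⟨0, by omega⟩, ⟨2*n-3, by omega⟩⟩ : Fin 2 × Fin (2*n+1))}
        = hexT n (n-1) := by
      ext w
      simp only [mem_diff, mem_compl_iff, mem_singleton_iff, hexTop, hexT, mem_setOf_eq,
        Prod.ext_iff, Fin.ext_iff]
      have hb1 := w.1.isLt
      have hb2 := w.2.isLt
      try dsimp only
      omega
    rw [hset] at e2
    obtain ⟨e3⟩ := chain_all n hn2 (n-1) (by omega) le_rfl
    exact ⟨(e1.trans e2).trans e3⟩


noncomputable section

/-- the ℓ¹ unit sphere inside Euclidean space -/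
def l1S (m : ℕ) : Set (EuclideanSpace ℝ (Fin m)) := {y | ∑ i, |y i| = 1}

lemma l1S_ne_zero {m : ℕ} {y : EuclideanSpace ℝ (Fin m)} (hy : y ∈ l1S m) : y ≠ 0 := by
  intro h
  subst h
  have : (∑ i : Fin m, |(0 : EuclideanSpace ℝ (Fin m)) i|) = 0 := by
    apply Finset.sum_eq_zero
    intro i _
    simp
  rw [l1S, mem_setOf_eq, this] at hy
  exact one_ne_zero hy.symm

lemma sphere'_ne_zero {m : ℕ} {x : EuclideanSpace ℝ (Fin m)} (hx : x ∈ sphere' m) : x ≠ 0 := by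
  intro h
  rw [sphere', mem_sphere_zero_iff_norm] at hx
  rw [h, norm_zero] at hx
  exact one_ne_zero hx.symm

lemma sumAbs_pos {m : ℕ} {x : EuclideanSpace ℝ (Fin m)} (hx : x ≠ 0) :
    0 < ∑ i, |x i| := by
  by_contra hc
  push_neg at hc
  have h0 : ∑ i, |x i| = 0 :=
    le_antisymm hc (Finset.sum_nonneg (fun i _ => abs_nonneg _))
  rw [Finset.sum_eq_zero_iff_of_nonneg (fun i _ => abs_nonneg _)] at h0
  apply hx
  ext i
  exact abs_eq_zero.mp (h0 i (Finset.mem_univ i))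

lemma smul_sumAbs {m : ℕ} (c : ℝ) (hc : 0 ≤ c) (x : EuclideanSpace ℝ (Fin m)) :
    ∑ i, |(c • x) i| = c * ∑ i, |x i| := by
  rw [Finset.mul_sum]
  apply Finset.sum_congr rfl
  intro i _
  rw [PiLp.smul_apply, smul_eq_mul, abs_mul, abs_of_nonneg hc]

/-- Step B : the ℓ¹ sphere is homeomorphic to the round sphere. -/
def l1_homeo_sphere (m : ℕ) : Homeomorph ↥(l1S m) ↥(sphere' m) where
  toFun := fun y => ⟨‖(y : EuclideanSpace ℝ (Fin m))‖⁻¹ • (y : EuclideanSpace ℝ (Fin m)), by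
    have hy := l1S_ne_zero y.2
    rw [sphere', mem_sphere_zero_iff_norm, norm_smul, norm_inv, norm_norm]
    rw [inv_mul_cancel₀ (norm_ne_zero_iff.mpr hy)]⟩
  invFun := fun x => ⟨(∑ i, |(x : EuclideanSpace ℝ (Fin m)) i|)⁻¹ • (x : EuclideanSpace ℝ (Fin m)), by
    have hx := sphere'_ne_zero x.2
    have hpos := sumAbs_pos hx
    rw [l1S, mem_setOf_eq, smul_sumAbs _ (by positivity)]
    rw [inv_mul_cancel₀ (ne_of_gt hpos)]⟩
  left_inv := by
    intro y
    apply Subtype.ext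
    have hy := l1S_ne_zero y.2
    have hnorm : (0:ℝ) < ‖(y : EuclideanSpace ℝ (Fin m))‖ := norm_pos_iff.mpr hy
    show (∑ i, |(‖(y:EuclideanSpace ℝ (Fin m))‖⁻¹ • (y:EuclideanSpace ℝ (Fin m))) i|)⁻¹ •
      (‖(y:EuclideanSpace ℝ (Fin m))‖⁻¹ • (y:EuclideanSpace ℝ (Fin m))) = (y:EuclideanSpace ℝ (Fin m))
    rw [smul_sumAbs _ (by positivity), y.2, mul_one, smul_smul, inv_inv,
      mul_inv_cancel₀ (ne_of_gt hnorm), one_smul]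
  right_inv := by
    intro x
    apply Subtype.ext
    have hx := sphere'_ne_zero x.2
    have hpos := sumAbs_pos hx
    have hxnorm : ‖(x : EuclideanSpace ℝ (Fin m))‖ = 1 := by
      have h := x.2
      simp only [sphere'] at h
      rwa [mem_sphere_zero_iff_norm] at h
    show ‖(∑ i, |(x:EuclideanSpace ℝ (Fin m)) i|)⁻¹ • (x:EuclideanSpace ℝ (Fin m))‖⁻¹ •
      ((∑ i, |(x:EuclideanSpace ℝ (Fin m)) i|)⁻¹ • (x:EuclideanSpace ℝ (Fin m))) = (x:EuclideanSpace ℝ (Fin m))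
    rw [norm_smul, norm_inv, Real.norm_eq_abs, abs_of_pos hpos, hxnorm, mul_one, smul_smul,
      inv_inv, mul_inv_cancel₀ (ne_of_gt hpos), one_smul]
  continuous_toFun := by
    apply Continuous.subtype_mk
    have h1 : Continuous (fun y : ↥(l1S m) => (y : EuclideanSpace ℝ (Fin m))) :=
      continuous_subtype_val
    have h2 : Continuous (fun y : ↥(l1S m) => ‖(y : EuclideanSpace ℝ (Fin m))‖⁻¹) := by
      apply Continuous.inv₀ (continuous_norm.comp h1)
      intro y
      exact norm_ne_zero_iff.mpr (l1S_ne_zero y.2)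
    exact h2.smul h1
  continuous_invFun := by
    apply Continuous.subtype_mk
    have h1 : Continuous (fun x : ↥(sphere' m) => (x : EuclideanSpace ℝ (Fin m))) :=
      continuous_subtype_val
    have hcoord : ∀ i, Continuous (fun x : ↥(sphere' m) => (x : EuclideanSpace ℝ (Fin m)) i) :=
      fun i => (continuous_apply i).comp ((PiLp.continuous_ofLp 2 _).comp h1)
    have h2 : Continuous (fun x : ↥(sphere' m) => (∑ i, |(x : EuclideanSpace ℝ (Fin m)) i|)⁻¹) := by
      apply Continuous.inv₀
      · exact continuous_finset_sum _ (fun i _ => (hcoord i).abs)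
      · intro x
        exact ne_of_gt (sumAbs_pos (sphere'_ne_zero x.2))
    exact h2.smul h1

section StepA
variable {V : Type*} [Fintype V] [DecidableEq V] (G : SimpleGraph V)
variable {m : ℕ} (p q : Fin m → V)

/-- from a point of the ℓ¹ sphere, build a point of the realization -/
def matchInv (y : EuclideanSpace ℝ (Fin m)) : V → ℝ := fun v =>
  ∑ i, ((if v = p i then max (y i) 0 else 0) + (if v = q i then max (-(y i)) 0 else 0))

variable (hp : Function.Injective p) (hq : Function.Injective q)
  (hpq : ∀ i j, p i ≠ q j)
  (hadjpq : ∀ i, G.Adj (p i) (q i))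
  (hpp : ∀ i j, ¬ G.Adj (p i) (p j)) (hqq : ∀ i j, ¬ G.Adj (q i) (q j))
  (hpq' : ∀ i j, G.Adj (p i) (q j) → i = j)

include hp hq hpq in
lemma matchInv_p (y : EuclideanSpace ℝ (Fin m)) (i₀ : Fin m) :
    matchInv p q y (p i₀) = max (y i₀) 0 := by
  unfold matchInv
  rw [Finset.sum_add_distrib]
  have h1 : ∑ i, (if p i₀ = p i then max (y i) 0 else 0) = max (y i₀) 0 := by
    have : ∀ i : Fin m, (if p i₀ = p i then max (y i) 0 else 0)
        = (if i = i₀ then max (y i) 0 else 0) := by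
      intro i
      congr 1
      simp only [eq_iff_iff]
      constructor
      · intro h; exact (hp h).symm
      · intro h; rw [h]
    rw [Finset.sum_congr rfl (fun i _ => this i)]
    rw [Finset.sum_ite_eq' Finset.univ i₀ (fun i => max (y i) 0)]
    simp
  have h2 : ∑ i, (if p i₀ = q i then max (-(y i)) 0 else 0) = 0 := by
    apply Finset.sum_eq_zero
    intro i _
    rw [if_neg (hpq i₀ i)]
  rw [h1, h2, add_zero]

include hp hq hpq in
lemma matchInv_q (y : EuclideanSpace ℝ (Fin m)) (i₀ : Fin m) :
    matchInv p q y (q i₀) = max (-(y i₀)) 0 := by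
  unfold matchInv
  rw [Finset.sum_add_distrib]
  have h1 : ∑ i, (if q i₀ = p i then max (y i) 0 else 0) = 0 := by
    apply Finset.sum_eq_zero
    intro i _
    rw [if_neg (fun h => hpq i i₀ h.symm)]
  have h2 : ∑ i, (if q i₀ = q i then max (-(y i)) 0 else 0) = max (-(y i₀)) 0 := by
    have : ∀ i : Fin m, (if q i₀ = q i then max (-(y i)) 0 else 0)
        = (if i = i₀ then max (-(y i)) 0 else 0) := by
      intro i
      congr 1
      simp only [eq_iff_iff]
      constructor
      · intro h; exact (hq h).symm
      · intro h; rw [h]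
    rw [Finset.sum_congr rfl (fun i _ => this i)]
    rw [Finset.sum_ite_eq' Finset.univ i₀ (fun i => max (-(y i)) 0)]
    simp
  rw [h1, h2, zero_add]

lemma matchInv_notin (y : EuclideanSpace ℝ (Fin m)) (v : V)
    (hv : v ∉ Set.range p ∪ Set.range q) : matchInv p q y v = 0 := by
  unfold matchInv
  apply Finset.sum_eq_zero
  intro i _
  rw [if_neg, if_neg]
  · simp
  · intro h; exact hv (Or.inr ⟨i, h.symm⟩)
  · intro h; exact hv (Or.inl ⟨i, h.symm⟩)

lemma matchInv_nonneg (y : EuclideanSpace ℝ (Fin m)) (v : V) : 0 ≤ matchInv p q y v := by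
  unfold matchInv
  apply Finset.sum_nonneg
  intro i _
  apply add_nonneg <;> split_ifs <;> simp [le_max_right]

include hp hq hpq hadjpq hpp hqq hpq' in
lemma matchInv_mem (y : EuclideanSpace ℝ (Fin m)) (hy : y ∈ l1S m) :
    matchInv p q y ∈ indRealizationIn G (Set.range p ∪ Set.range q) := by
  have hsupp : support (matchInv p q y) ⊆ Set.range p ∪ Set.range q := by
    intro v hv
    by_contra hc
    exact hv (matchInv_notin p q y v hc)
  refine ⟨matchInv_nonneg p q y, Set.finite_univ.subset (subset_univ _), hsupp, ?_, ?_⟩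
  · -- independence
    intro a ha b hb hab hadj
    have haS := hsupp ha
    have hbS := hsupp hb
    have key : ∀ i, matchInv p q y (p i) ≠ 0 → matchInv p q y (q i) ≠ 0 → False := by
      intro i h1 h2
      rw [matchInv_p p q hp hq hpq] at h1
      rw [matchInv_q p q hp hq hpq] at h2
      rcases le_total (y i) 0 with h | h
      · exact h1 (max_eq_right h)
      · exact h2 (max_eq_right (neg_nonpos.mpr h))
    rcases haS with ⟨i, hi⟩ | ⟨i, hi⟩ <;> rcases hbS with ⟨j, hj⟩ | ⟨j, hj⟩
    · subst hi; subst hj; exact hpp i j hadj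
    · subst hi; subst hj
      have hij := hpq' i j hadj
      subst hij
      exact key _ ha hb
    · subst hi; subst hj
      have hij := hpq' j i (G.adj_symm hadj)
      subst hij
      exact key _ hb ha
    · subst hi; subst hj; exact hqq i j hadj
  · -- total mass one
    rw [finsum_eq_sum_of_fintype]
    unfold matchInv
    rw [Finset.sum_comm]
    have : ∀ i : Fin m,
        (∑ v : V, ((if v = p i then max (y i) 0 else 0) + (if v = q i then max (-(y i)) 0 else 0)))
          = |y i| := by
      intro i
      rw [Finset.sum_add_distrib,
        Finset.sum_ite_eq' Finset.univ (p i) (fun _ => max (y i) 0),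
        Finset.sum_ite_eq' Finset.univ (q i) (fun _ => max (-(y i)) 0)]
      simp only [Finset.mem_univ, if_true]
      rcases le_total 0 (y i) with h | h
      · rw [max_eq_left h, max_eq_right (neg_nonpos.mpr h), add_zero, abs_of_nonneg h]
      · rw [max_eq_right h, max_eq_left (neg_nonneg.mpr h), zero_add, abs_of_nonpos h]
    rw [Finset.sum_congr rfl (fun i _ => this i)]
    exact hy

include hadjpq hpq in
lemma real_pair_zero (f : V → ℝ) (hf : f ∈ indRealizationIn G (Set.range p ∪ Set.range q))
    (i : Fin m) : f (p i) = 0 ∨ f (q i) = 0 := by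
  by_contra hc
  push_neg at hc
  have h1 : p i ∈ support f := hc.1
  have h2 : q i ∈ support f := hc.2
  exact hf.2.2.2.1 h1 h2 (hpq i i) (hadjpq i)

include hp hq hpq hadjpq in
lemma matchFwd_mem (f : V → ℝ) (hf : f ∈ indRealizationIn G (Set.range p ∪ Set.range q)) :
    ((WithLp.equiv 2 (Fin m → ℝ)).symm (fun i => f (p i) - f (q i))) ∈ l1S m := by
  obtain ⟨hpos, hfin, hsub, hind, hsum⟩ := hf
  simp only [l1S, mem_setOf_eq, WithLp.equiv_symm_apply, PiLp.toLp_apply]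
  have habs : ∀ i : Fin m, |f (p i) - f (q i)| = f (p i) + f (q i) := by
    intro i
    rcases real_pair_zero G p q hpq hadjpq f ⟨hpos, hfin, hsub, hind, hsum⟩ i with h | h
    · rw [h]; rw [zero_sub, abs_neg, abs_of_nonneg (hpos _), zero_add]
    · rw [h]; rw [sub_zero, abs_of_nonneg (hpos _), add_zero]
  rw [Finset.sum_congr rfl (fun i _ => habs i), Finset.sum_add_distrib]
  rw [finsum_eq_sum_of_fintype] at hsum
  have himage : ∑ i : Fin m, f (p i) = ∑ v ∈ Finset.univ.image p, f v :=
    (Finset.sum_image (fun a _ b _ h => hp h)).symm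
  have himageq : ∑ i : Fin m, f (q i) = ∑ v ∈ Finset.univ.image q, f v :=
    (Finset.sum_image (fun a _ b _ h => hq h)).symm
  have hdisj : Disjoint (Finset.univ.image p) (Finset.univ.image q) := by
    rw [Finset.disjoint_left]
    intro a ha hb
    simp only [Finset.mem_image, Finset.mem_univ, true_and] at ha hb
    obtain ⟨i, hi⟩ := ha
    obtain ⟨j, hj⟩ := hb
    exact hpq i j (hi.trans hj.symm)
  rw [himage, himageq, ← Finset.sum_union hdisj]
  rw [← hsum]
  apply Finset.sum_subset (Finset.subset_univ _)
  intro v _ hv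
  by_contra hvne
  have : v ∈ Set.range p ∪ Set.range q := hsub hvne
  rcases this with ⟨i, hi⟩ | ⟨i, hi⟩
  · exact hv (Finset.mem_union_left _ (Finset.mem_image.mpr ⟨i, Finset.mem_univ i, hi⟩))
  · exact hv (Finset.mem_union_right _ (Finset.mem_image.mpr ⟨i, Finset.mem_univ i, hi⟩))

include hp hq hpq hadjpq hpp hqq hpq' in
lemma matching_homeo :
    Nonempty (Homeomorph ↥(indRealizationIn G (Set.range p ∪ Set.range q)) ↥(l1S m)) := by
  refine ⟨{
    toFun := fun f => ⟨(WithLp.equiv 2 (Fin m → ℝ)).symm (fun i => f.1 (p i) - f.1 (q i)),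
      matchFwd_mem G p q hp hq hpq hadjpq f.1 f.2⟩
    invFun := fun y => ⟨matchInv p q y.1,
      matchInv_mem G p q hp hq hpq hadjpq hpp hqq hpq' y.1 y.2⟩
    left_inv := ?_
    right_inv := ?_
    continuous_toFun := ?_
    continuous_invFun := ?_ }⟩
  · intro f
    apply Subtype.ext
    funext v
    show matchInv p q ((WithLp.equiv 2 (Fin m → ℝ)).symm (fun i => f.1 (p i) - f.1 (q i))) v
      = f.1 v
    by_cases hv : v ∈ Set.range p ∪ Set.range q
    · rcases hv with ⟨i, hi⟩ | ⟨i, hi⟩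
      · subst hi
        rw [matchInv_p p q hp hq hpq]
        simp only [WithLp.equiv_symm_apply, PiLp.toLp_apply]
        rcases real_pair_zero G p q hpq hadjpq f.1 f.2 i with h | h
        · rw [h, zero_sub]
          rw [max_eq_right (neg_nonpos.mpr (f.2.1 _))]
        · rw [h, sub_zero, max_eq_left (f.2.1 _)]
      · subst hi
        rw [matchInv_q p q hp hq hpq]
        simp only [WithLp.equiv_symm_apply, PiLp.toLp_apply]
        rcases real_pair_zero G p q hpq hadjpq f.1 f.2 i with h | h
        · rw [h, zero_sub, neg_neg, max_eq_left (f.2.1 _)]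
        · rw [h, sub_zero]
          rw [max_eq_right (neg_nonpos.mpr (f.2.1 _))]
    · rw [matchInv_notin p q _ v hv]
      by_contra hne
      exact hv (f.2.2.2.1 (fun h => hne h.symm))
  · intro y
    apply Subtype.ext
    apply (WithLp.equiv 2 (Fin m → ℝ)).injective
    funext i
    show matchInv p q y.1 (p i) - matchInv p q y.1 (q i) = (WithLp.equiv 2 (Fin m → ℝ)) y.1 i
    rw [matchInv_p p q hp hq hpq, matchInv_q p q hp hq hpq]
    have : (WithLp.equiv 2 (Fin m → ℝ)) y.1 i = y.1 i := rfl
    rw [this]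
    rcases le_total 0 (y.1 i) with h | h
    · rw [max_eq_left h, max_eq_right (neg_nonpos.mpr h), sub_zero]
    · rw [max_eq_right h, max_eq_left (neg_nonneg.mpr h), zero_sub, neg_neg]
  · apply Continuous.subtype_mk
    apply (PiLp.continuous_toLp 2 (fun _ : Fin m => ℝ)).comp
    apply continuous_pi
    intro i
    exact ((continuous_apply (p i)).comp continuous_subtype_val).sub
      ((continuous_apply (q i)).comp continuous_subtype_val)
  · apply Continuous.subtype_mk
    apply continuous_pi
    intro v
    apply continuous_finset_sum
    intro i _
    have hcoord : Continuous (fun y : ↥(l1S m) => (y : EuclideanSpace ℝ (Fin m)) i) :=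
      (continuous_apply i).comp ((PiLp.continuous_ofLp 2 _).comp continuous_subtype_val)
    apply Continuous.add
    · split_ifs with h
      · exact hcoord.max continuous_const
      · exact continuous_const
    · split_ifs with h
      · exact hcoord.neg.max continuous_const
      · exact continuous_const

end StepA

end

def prowN (n j : ℕ) : ℕ :=
  if j = n then 1 else if j = n - 1 then 0 else if j = 0 then 0 else (n + j + 1) % 2
def qrowN (n j : ℕ) : ℕ :=
  if j = n then 1 else if j = n - 1 then 0 else if j = 0 then 1 else (n + j + 1) % 2
def pcolN (n j : ℕ) : ℕ :=
  if j = n then 2 * n - 1 else if j = n - 1 then 2 * n - 2 else if j = 0 then 0 else 2 * j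
def qcolN (n j : ℕ) : ℕ :=
  if j = n then 2 * n else if j = n - 1 then 2 * n - 1 else if j = 0 then 0 else 2 * j + 1

lemma prowN_lt (n j : ℕ) : prowN n j < 2 := by unfold prowN; split_ifs <;> omega
lemma qrowN_lt (n j : ℕ) : qrowN n j < 2 := by unfold qrowN; split_ifs <;> omega
lemma pcolN_lt (n j : ℕ) (h : j ≤ n) : pcolN n j < 2 * n + 1 := by
  unfold pcolN; split_ifs <;> omega
lemma qcolN_lt (n j : ℕ) (h : j ≤ n) : qcolN n j < 2 * n + 1 := by
  unfold qcolN; split_ifs <;> omega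

def pfun (n : ℕ) (j : Fin (n + 1)) : Fin 2 × Fin (2 * n + 1) :=
  (⟨prowN n j, prowN_lt n j⟩, ⟨pcolN n j, pcolN_lt n j (by omega)⟩)
def qfun (n : ℕ) (j : Fin (n + 1)) : Fin 2 × Fin (2 * n + 1) :=
  (⟨qrowN n j, qrowN_lt n j⟩, ⟨qcolN n j, qcolN_lt n j (by omega)⟩)

section withn
variable (n : ℕ) (hn : 1 ≤ n)

include hn

lemma pfun_inj : Function.Injective (pfun n) := by
  intro a b h
  simp only [pfun, Prod.ext_iff, Fin.ext_iff] at h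
  obtain ⟨h1, h2⟩ := h
  have ha := a.isLt
  have hb := b.isLt
  apply Fin.ext
  unfold prowN at h1
  unfold pcolN at h2
  split_ifs at h1 h2 <;> omega

lemma qfun_inj : Function.Injective (qfun n) := by
  intro a b h
  simp only [qfun, Prod.ext_iff, Fin.ext_iff] at h
  obtain ⟨h1, h2⟩ := h
  have ha := a.isLt
  have hb := b.isLt
  apply Fin.ext
  unfold qrowN at h1
  unfold qcolN at h2
  split_ifs at h1 h2 <;> omega

lemma pfun_ne_qfun : ∀ i j, pfun n i ≠ qfun n j := by
  intro i j h
  simp only [pfun, qfun, Prod.ext_iff, Fin.ext_iff] at h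
  obtain ⟨h1, h2⟩ := h
  have ha := i.isLt
  have hb := j.isLt
  unfold prowN at h1
  unfold qcolN at h2
  unfold qrowN at h1
  unfold pcolN at h2
  split_ifs at h1 h2 <;> omega

lemma pfun_adj_qfun : ∀ i, (hexRow n).Adj (pfun n i) (qfun n i) := by
  intro i
  rw [hex_adj]
  simp only [pfun, qfun]
  have ha := i.isLt
  unfold prowN qrowN pcolN qcolN
  split_ifs <;> omega

lemma pfun_not_adj : ∀ i j, ¬ (hexRow n).Adj (pfun n i) (pfun n j) := by
  intro i j h
  rw [hex_adj] at h
  simp only [pfun] at h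
  have ha := i.isLt
  have hb := j.isLt
  unfold prowN pcolN at h
  split_ifs at h <;> (try simp only [false_and, and_false, false_or, or_false, true_and, and_true, true_or, or_true] at h) <;> omega

lemma qfun_not_adj : ∀ i j, ¬ (hexRow n).Adj (qfun n i) (qfun n j) := by
  intro i j h
  rw [hex_adj] at h
  simp only [qfun] at h
  have ha := i.isLt
  have hb := j.isLt
  unfold qrowN qcolN at h
  split_ifs at h <;> (try simp only [false_and, and_false, false_or, or_false, true_and, and_true, true_or, or_true] at h) <;> omega

lemma pfun_adj_qfun_eq : ∀ i j, (hexRow n).Adj (pfun n i) (qfun n j) → i = j := by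
  intro i j h
  rw [hex_adj] at h
  simp only [pfun, qfun] at h
  have ha := i.isLt
  have hb := j.isLt
  apply Fin.ext
  unfold prowN qrowN pcolN qcolN at h
  split_ifs at h <;> (try simp only [false_and, and_false, false_or, or_false, true_and, and_true, true_or, or_true] at h) <;> omega

lemma hexFin_eq_ranges : hexFin n = Set.range (pfun n) ∪ Set.range (qfun n) := by
  apply Set.Subset.antisymm
  · intro v hv
    simp only [hexFin, mem_setOf_eq] at hv
    have hb1 := v.1.isLt
    have hb2 := v.2.isLt
    rcases hv with ⟨h1, h2⟩ | ⟨h1, h2, h3⟩ | ⟨h1, h2⟩ | ⟨h1, h2⟩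
    · -- column 0, n ≥ 2
      have h : (v.1 : ℕ) = 0 ∨ (v.1 : ℕ) = 1 := by omega
      rcases h with h | h
      · refine Or.inl ⟨⟨0, by omega⟩, ?_⟩
        simp only [pfun, prowN, pcolN, Prod.ext_iff, Fin.ext_iff]
        split_ifs <;> omega
      · refine Or.inr ⟨⟨0, by omega⟩, ?_⟩
        simp only [qfun, qrowN, qcolN, Prod.ext_iff, Fin.ext_iff]
        split_ifs <;> omega
    · -- middle pairs
      rcases Nat.even_or_odd (v.2 : ℕ) with he | ho
      · refine Or.inl ⟨⟨(v.2 : ℕ) / 2, by omega⟩, ?_⟩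
        simp only [pfun, prowN, pcolN, Prod.ext_iff, Fin.ext_iff]
        obtain ⟨c, hc⟩ := he
        split_ifs <;> omega
      · refine Or.inr ⟨⟨(v.2 : ℕ) / 2, by omega⟩, ?_⟩
        simp only [qfun, qrowN, qcolN, Prod.ext_iff, Fin.ext_iff]
        obtain ⟨c, hc⟩ := ho
        split_ifs <;> omega
    · -- row 0 top pair
      rcases h2 with h2 | h2
      · refine Or.inl ⟨⟨n - 1, by omega⟩, ?_⟩
        simp only [pfun, prowN, pcolN, Prod.ext_iff, Fin.ext_iff]
        split_ifs <;> omega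
      · refine Or.inr ⟨⟨n - 1, by omega⟩, ?_⟩
        simp only [qfun, qrowN, qcolN, Prod.ext_iff, Fin.ext_iff]
        split_ifs <;> omega
    · -- row 1 top pair
      rcases h2 with h2 | h2
      · refine Or.inl ⟨⟨n, by omega⟩, ?_⟩
        simp only [pfun, prowN, pcolN, Prod.ext_iff, Fin.ext_iff]
        split_ifs <;> omega
      · refine Or.inr ⟨⟨n, by omega⟩, ?_⟩
        simp only [qfun, qrowN, qcolN, Prod.ext_iff, Fin.ext_iff]
        split_ifs <;> omega
  · intro v hv
    simp only [hexFin, mem_setOf_eq]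
    rcases hv with ⟨j, rfl⟩ | ⟨j, rfl⟩
    · have hb := j.isLt
      simp only [pfun, prowN, pcolN]
      split_ifs <;> omega
    · have hb := j.isLt
      simp only [qfun, qrowN, qcolN]
      split_ifs <;> omega

end withn



set_option maxHeartbeats 1000000 in
/-- for `n ≥ 1`, `Ind (X_n^{(1)}) ≃ S^n`, where
`X_n^{(1)} = H_{1×1×n} \ {v^1_{2n+1}}`. -/
theorem ind_Xn1 (n : ℕ) (hn : 1 ≤ n) :
    Nonempty (ContinuousMap.HomotopyEquiv (↥(Xn1 n)) (↥(sphere' (n + 1)))) := by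
  obtain ⟨e1⟩ := top_to_fin n hn
  rw [hexFin_eq_ranges n hn] at e1
  obtain ⟨e2⟩ := matching_homeo (hexRow n) (pfun n) (qfun n)
    (pfun_inj n hn) (qfun_inj n hn) (pfun_ne_qfun n hn) (pfun_adj_qfun n hn)
    (pfun_not_adj n hn) (qfun_not_adj n hn) (pfun_adj_qfun_eq n hn)
  have e3 := l1_homeo_sphere (n + 1)
  exact ⟨(e1.trans e2.toHomotopyEquiv).trans e3.toHomotopyEquiv⟩
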